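/- Let D- be a canonical negative Boolean automaton double-cycle with both cycle sizes n and m even, n,m ≥ 2. Any sequence of asynchronous single-automaton updates transforming the all-zeros configuration (0^n, 0^m) into the maximally expressive configuration ((10)^{n/2}, (10)^{m/2}) has length Ω(n² + m²); combined with the upper bound (n+m)² − 5(n−1) − 3m + O(n+m), the minimal number of updates needed is Θ(n² + m²). -/

import Mathlib

/-- A configuration of a Boolean automaton double-cycle with cycles of sizes `n`
and `m`: the shared automaton `c` is index 0 of both cycles (so valid
configurations satisfy `x.1 0 = x.2 0`). -/
abbrev Cfg (n m : ℕ) := (Fin n → Bool) × (Fin m → Bool)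

/-- One asynchronous single-automaton update in a double-cycle whose shared
automaton `c` computes `fc`; every non-shared automaton copies its predecessor. -/
inductive Step {n m : ℕ} (fc : Cfg n m → Bool) : Cfg n m → Cfg n m → Prop
  | left (x : Cfg n m) (i : Fin n) (hi : 1 ≤ i.val) :
      Step fc x (Function.update x.1 i (x.1 ⟨i.val - 1, by have := i.isLt; omega⟩), x.2)
  | right (x : Cfg n m) (j : Fin m) (hj : 1 ≤ j.val) :
      Step fc x (x.1, Function.update x.2 j (x.2 ⟨j.val - 1, by have := j.isLt; omega⟩))
  | center (x : Cfg n m) (i : Fin n) (j : Fin m) (hi : i.val = 0) (hj : j.val = 0) :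
      Step fc x (Function.update x.1 i (fc x), Function.update x.2 j (fc x))

/-- `Steps fc k x y`: configuration `y` is obtained from `x` by exactly `k`
asynchronous single-automaton updates. -/
def Steps {n m : ℕ} (fc : Cfg n m → Bool) : ℕ → Cfg n m → Cfg n m → Prop
  | 0, x, y => x = y
  | k + 1, x, y => ∃ z, Step fc x z ∧ Steps fc k z y

namespace Aux19

variable {n m : ℕ} {fc : Cfg n m → Bool}

theorem steps_trans : ∀ (a : ℕ) {b : ℕ} {x y z : Cfg n m},
    Steps fc a x y → Steps fc b y z → Steps fc (a + b) x z
  | 0, b, x, y, z, h1, h2 => by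
      cases h1; simpa using h2
  | a + 1, b, x, y, z, h1, h2 => by
      obtain ⟨w, hs, h⟩ := h1
      rw [show a + 1 + b = (a + b) + 1 by omega]
      exact ⟨w, hs, steps_trans a h h2⟩

theorem steps_one {x y : Cfg n m} (h : Step fc x y) : Steps fc 1 x y := ⟨y, h, rfl⟩

theorem steps_snoc {k : ℕ} {x y z : Cfg n m} (h : Steps fc k x y) (h2 : Step fc y z) :
    Steps fc (k + 1) x z := steps_trans k h (steps_one h2)

theorem steps_mul {st : ℕ → Cfg n m} {d : ℕ} :
    ∀ N : ℕ, (∀ s, s < N → Steps fc d (st s) (st (s + 1))) →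
      Steps fc (N * d) (st 0) (st N)
  | 0, _ => by rw [Nat.zero_mul]; rfl
  | N + 1, h => by
      rw [show (N + 1) * d = N * d + d by ring]
      exact steps_trans _ (steps_mul N fun s hs => h s (by omega)) (h N (by omega))

/-- partial down-shift: cells with index ≥ j hold predecessor's value -/
def PS (g : Fin n → Bool) (j : ℕ) : Fin n → Bool :=
  fun i => if j ≤ i.val then g ⟨i.val - 1, by have := i.isLt; omega⟩ else g i

lemma fin_cong (g : Fin n → Bool) {a b : Fin n} (h : a.val = b.val) : g a = g b :=
  congrArg g (Fin.ext h)

theorem steps_shiftL (g : Fin n → Bool) (h : Fin m → Bool) :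
    ∀ k : ℕ, k ≤ n - 1 → Steps fc k (g, h) (PS g (n - k), h)
  | 0, _ => by
      have : PS g (n - 0) = g := by
        funext i; simp only [PS]
        rw [if_neg (by have := i.isLt; omega)]
      rw [this]; rfl
  | k + 1, hk => by
      have hkn : k ≤ n - 1 := by omega
      have ih := steps_shiftL g h k hkn
      have hlt : n - k - 1 < n := by omega
      have hone : 1 ≤ n - k - 1 := by omega
      have hstep := Step.left (fc := fc) (PS g (n - k), h) ⟨n - k - 1, hlt⟩ hone
      have heq : (Function.update (PS g (n - k)) ⟨n - k - 1, hlt⟩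
          ((PS g (n - k)) ⟨n - k - 1 - 1, by omega⟩), h) = (PS g (n - (k + 1)), h) := by
        refine Prod.ext ?_ rfl
        show Function.update (PS g (n - k)) ⟨n - k - 1, hlt⟩
          ((PS g (n - k)) ⟨n - k - 1 - 1, by omega⟩) = PS g (n - (k + 1))
        funext x
        rw [Function.update_apply]
        by_cases hx : x = ⟨n - k - 1, hlt⟩
        · rw [if_pos hx, hx]
          simp only [PS]
          rw [if_neg (by omega)]
          rw [if_pos (by simp; omega)]
        · rw [if_neg hx]
          have hxv : x.val ≠ n - k - 1 := fun hc => hx (Fin.ext hc)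
          simp only [PS]
          by_cases h1 : n - k ≤ x.val
          · rw [if_pos h1, if_pos (by omega)]
          · rw [if_neg h1, if_neg (by omega)]
      exact steps_snoc ih (heq ▸ hstep)

theorem steps_shiftR (g : Fin n → Bool) (h : Fin m → Bool) :
    ∀ k : ℕ, k ≤ m - 1 → Steps fc k (g, h) (g, PS h (m - k))
  | 0, _ => by
      have : PS h (m - 0) = h := by
        funext i; simp only [PS]
        rw [if_neg (by have := i.isLt; omega)]
      rw [this]; rfl
  | k + 1, hk => by
      have hkm : k ≤ m - 1 := by omega
      have ih := steps_shiftR g h k hkm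
      have hlt : m - k - 1 < m := by omega
      have hone : 1 ≤ m - k - 1 := by omega
      have hstep := Step.right (fc := fc) (g, PS h (m - k)) ⟨m - k - 1, hlt⟩ hone
      have heq : (g, Function.update (PS h (m - k)) ⟨m - k - 1, hlt⟩
          ((PS h (m - k)) ⟨m - k - 1 - 1, by omega⟩)) = (g, PS h (m - (k + 1))) := by
        refine Prod.ext rfl ?_
        show Function.update (PS h (m - k)) ⟨m - k - 1, hlt⟩
          ((PS h (m - k)) ⟨m - k - 1 - 1, by omega⟩) = PS h (m - (k + 1))
        funext x
        rw [Function.update_apply]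
        by_cases hx : x = ⟨m - k - 1, hlt⟩
        · rw [if_pos hx, hx]
          simp only [PS]
          rw [if_neg (by omega)]
          rw [if_pos (by simp; omega)]
        · rw [if_neg hx]
          have hxv : x.val ≠ m - k - 1 := fun hc => hx (Fin.ext hc)
          simp only [PS]
          by_cases h1 : m - k ≤ x.val
          · rw [if_pos h1, if_pos (by omega)]
          · rw [if_neg h1, if_neg (by omega)]
      exact steps_snoc ih (heq ▸ hstep)

/-- chain fill: cells 1..j hold the value of cell 0 -/
def CH (h : Fin m → Bool) (j : ℕ) : Fin m → Bool :=
  fun p => if 1 ≤ p.val ∧ p.val ≤ j then h ⟨0, by have := p.isLt; omega⟩ else h p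

theorem steps_chainR (g : Fin n → Bool) (h : Fin m → Bool) :
    ∀ k : ℕ, k ≤ m - 1 → Steps fc k (g, h) (g, CH h k)
  | 0, _ => by
      have : CH h 0 = h := by
        funext p; simp only [CH]
        rw [if_neg (by omega)]
      rw [this]; rfl
  | k + 1, hk => by
      have hkm : k ≤ m - 1 := by omega
      have ih := steps_chainR g h k hkm
      have hlt : k + 1 < m := by omega
      have hstep := Step.right (fc := fc) (g, CH h k) ⟨k + 1, hlt⟩ (by simp)
      have heq : (g, Function.update (CH h k) ⟨k + 1, hlt⟩
          ((CH h k) ⟨k + 1 - 1, by omega⟩)) = (g, CH h (k + 1)) := by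
        refine Prod.ext rfl ?_
        show Function.update (CH h k) ⟨k + 1, hlt⟩
          ((CH h k) ⟨k + 1 - 1, by omega⟩) = CH h (k + 1)
        funext x
        rw [Function.update_apply]
        have hsrc : (CH h k) ⟨k + 1 - 1, by omega⟩ = h ⟨0, by omega⟩ := by
          simp only [CH]
          by_cases h1 : 1 ≤ k
          · rw [if_pos (by simp; omega)]
          · rw [if_neg (by simp; omega)]
            exact fin_cong h (by simp; omega)
        by_cases hx : x = ⟨k + 1, hlt⟩
        · rw [if_pos hx, hx, hsrc]
          simp only [CH]
          rw [if_pos (by simp)]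
        · rw [if_neg hx]
          have hxv : x.val ≠ k + 1 := fun hc => hx (Fin.ext hc)
          simp only [CH]
          by_cases h1 : 1 ≤ x.val ∧ x.val ≤ k
          · rw [if_pos h1, if_pos (by omega)]
          · rw [if_neg h1, if_neg (by omega)]
      exact steps_snoc ih (heq ▸ hstep)

end Aux19
namespace Aux19

def X1 (n s : ℕ) : Fin n → Bool := fun i => decide ((s - i.val) % 2 = 1)
def X2 (m s : ℕ) : Fin m → Bool :=
  fun p => decide ((p.val = 0 ∧ s % 2 = 1) ∨ (1 ≤ p.val ∧ (s - 1) % 2 = 1))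
def Y2 (n m t : ℕ) : Fin m → Bool :=
  fun p => decide ((p.val < t ∧ (n + 1 + t - p.val) % 2 = 1) ∨ p.val = t)

variable {n m : ℕ} {fc : Cfg n m → Bool}

theorem round1 (hn : 2 ≤ n) (hm : 2 ≤ m) (hn2 : n % 2 = 0) (hm2 : m % 2 = 0)
    (hfc : ∀ z : Cfg n m, fc z = (!(z.1 ⟨n - 1, by omega⟩) && !(z.2 ⟨m - 1, by omega⟩)))
    (s : ℕ) :
    Steps fc (n + m - 1) (X1 n s, X2 m s) (X1 n (s + 1), X2 m (s + 1)) := by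
  have h1 : Steps fc (n - 1) (X1 n s, X2 m s) (PS (X1 n s) 1, X2 m s) := by
    have := steps_shiftL (fc := fc) (X1 n s) (X2 m s) (n - 1) le_rfl
    rwa [show n - (n - 1) = 1 by omega] at this
  have h2 : Steps fc (m - 1) (PS (X1 n s) 1, X2 m s)
      (PS (X1 n s) 1, CH (X2 m s) (m - 1)) :=
    steps_chainR _ _ _ le_rfl
  set z : Cfg n m := (PS (X1 n s) 1, CH (X2 m s) (m - 1)) with hz
  have hv : fc z = decide ((s + 1) % 2 = 1) := by
    rw [hfc]
    have e1 : z.1 ⟨n - 1, by omega⟩ = decide ((s - (n - 2)) % 2 = 1) := by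
      show PS (X1 n s) 1 ⟨n - 1, by omega⟩ = _
      simp only [PS]
      split_ifs with hif
      · show decide ((s - (n - 1 - 1)) % 2 = 1) = _
        rw [decide_eq_decide]; omega
      · exact absurd (show (1:ℕ) ≤ n - 1 by omega) hif
    have e2 : z.2 ⟨m - 1, by omega⟩ = decide (s % 2 = 1) := by
      show CH (X2 m s) (m - 1) ⟨m - 1, by omega⟩ = _
      simp only [CH]
      split_ifs with hif
      · show decide ((0 = 0 ∧ s % 2 = 1) ∨ (1 ≤ 0 ∧ (s - 1) % 2 = 1)) = _
        rw [decide_eq_decide]; omega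
      · exact absurd ⟨by omega, le_rfl⟩ hif
    rw [e1, e2, ← decide_not, ← decide_not, ← Bool.decide_and, decide_eq_decide]
    omega
  have hstep := Step.center (fc := fc) z ⟨0, by omega⟩ ⟨0, by omega⟩ rfl rfl
  have heq1 : Function.update z.1 ⟨0, by omega⟩ (fc z) = X1 n (s + 1) := by
    rw [hv]; funext i
    rw [Function.update_apply]
    by_cases hi : i = ⟨0, by omega⟩
    · rw [if_pos hi, hi]
      show _ = decide ((s + 1 - 0) % 2 = 1)
      rw [decide_eq_decide]; omega
    · rw [if_neg hi]
      have hiv : i.val ≠ 0 := fun hc => hi (Fin.ext hc)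
      show PS (X1 n s) 1 i = _
      simp only [PS]
      split_ifs with hif
      · show decide ((s - (i.val - 1)) % 2 = 1) = decide ((s + 1 - i.val) % 2 = 1)
        rw [decide_eq_decide]; omega
      · exact absurd (show 1 ≤ i.val by omega) hif
  have heq2 : Function.update z.2 ⟨0, by omega⟩ (fc z) = X2 m (s + 1) := by
    rw [hv]; funext p
    rw [Function.update_apply]
    by_cases hp : p = ⟨0, by omega⟩
    · rw [if_pos hp, hp]
      show _ = decide ((0 = 0 ∧ (s + 1) % 2 = 1) ∨ (1 ≤ 0 ∧ (s + 1 - 1) % 2 = 1))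
      rw [decide_eq_decide]; omega
    · rw [if_neg hp]
      have hpv : p.val ≠ 0 := fun hc => hp (Fin.ext hc)
      show CH (X2 m s) (m - 1) p = _
      simp only [CH]
      split_ifs with hif
      · show decide ((0 = 0 ∧ s % 2 = 1) ∨ (1 ≤ 0 ∧ (s - 1) % 2 = 1)) =
          decide ((p.val = 0 ∧ (s + 1) % 2 = 1) ∨ (1 ≤ p.val ∧ (s + 1 - 1) % 2 = 1))
        rw [decide_eq_decide]; omega
      · exact absurd ⟨by omega, by have := p.isLt; omega⟩ hif
  have h3 : Steps fc 1 z (X1 n (s + 1), X2 m (s + 1)) := by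
    refine steps_one ?_
    have heq : (Function.update z.1 ⟨0, by omega⟩ (fc z),
        Function.update z.2 ⟨0, by omega⟩ (fc z)) = (X1 n (s + 1), X2 m (s + 1)) :=
      Prod.ext heq1 heq2
    exact heq ▸ hstep
  have := steps_trans (n - 1) h1 (steps_trans (m - 1) h2 h3)
  rwa [show n - 1 + (m - 1 + 1) = n + m - 1 by omega] at this

theorem round2 (hn : 2 ≤ n) (hm : 2 ≤ m) (hn2 : n % 2 = 0) (hm2 : m % 2 = 0)
    (hfc : ∀ z : Cfg n m, fc z = (!(z.1 ⟨n - 1, by omega⟩) && !(z.2 ⟨m - 1, by omega⟩)))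
    (t : ℕ) :
    Steps fc (n + m - 1) (X1 n (n + 1 + t), Y2 n m t)
      (X1 n (n + 1 + (t + 1)), Y2 n m (t + 1)) := by
  have h1 : Steps fc (n - 1) (X1 n (n + 1 + t), Y2 n m t)
      (PS (X1 n (n + 1 + t)) 1, Y2 n m t) := by
    have := steps_shiftL (fc := fc) (X1 n (n + 1 + t)) (Y2 n m t) (n - 1) le_rfl
    rwa [show n - (n - 1) = 1 by omega] at this
  have h2 : Steps fc (m - 1) (PS (X1 n (n + 1 + t)) 1, Y2 n m t)
      (PS (X1 n (n + 1 + t)) 1, PS (Y2 n m t) 1) := by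
    have := steps_shiftR (fc := fc) (PS (X1 n (n + 1 + t)) 1) (Y2 n m t) (m - 1) le_rfl
    rwa [show m - (m - 1) = 1 by omega] at this
  set z : Cfg n m := (PS (X1 n (n + 1 + t)) 1, PS (Y2 n m t) 1) with hz
  have hv : fc z = decide ((n + 1 + (t + 1)) % 2 = 1) := by
    rw [hfc]
    have e1 : z.1 ⟨n - 1, by omega⟩ = decide ((n + 1 + t - (n - 2)) % 2 = 1) := by
      show PS (X1 n (n + 1 + t)) 1 ⟨n - 1, by omega⟩ = _
      simp only [PS]
      split_ifs with hif
      · show decide ((n + 1 + t - (n - 1 - 1)) % 2 = 1) = _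
        rw [decide_eq_decide]; omega
      · exact absurd (show (1:ℕ) ≤ n - 1 by omega) hif
    have e2 : z.2 ⟨m - 1, by omega⟩ =
        decide ((m - 2 < t ∧ (n + 1 + t - (m - 2)) % 2 = 1) ∨ m - 2 = t) := by
      show PS (Y2 n m t) 1 ⟨m - 1, by omega⟩ = _
      simp only [PS]
      split_ifs with hif
      · show decide ((m - 1 - 1 < t ∧ (n + 1 + t - (m - 1 - 1)) % 2 = 1) ∨ m - 1 - 1 = t) = _
        rw [decide_eq_decide]; omega
      · exact absurd (show (1:ℕ) ≤ m - 1 by omega) hif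
    rw [e1, e2, ← decide_not, ← decide_not, ← Bool.decide_and, decide_eq_decide]
    omega
  have hstep := Step.center (fc := fc) z ⟨0, by omega⟩ ⟨0, by omega⟩ rfl rfl
  have heq1 : Function.update z.1 ⟨0, by omega⟩ (fc z) = X1 n (n + 1 + (t + 1)) := by
    rw [hv]; funext i
    rw [Function.update_apply]
    by_cases hi : i = ⟨0, by omega⟩
    · rw [if_pos hi, hi]
      show _ = decide ((n + 1 + (t + 1) - 0) % 2 = 1)
      rw [decide_eq_decide]; omega
    · rw [if_neg hi]
      have hiv : i.val ≠ 0 := fun hc => hi (Fin.ext hc)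
      show PS (X1 n (n + 1 + t)) 1 i = _
      simp only [PS]
      split_ifs with hif
      · show decide ((n + 1 + t - (i.val - 1)) % 2 = 1) =
          decide ((n + 1 + (t + 1) - i.val) % 2 = 1)
        rw [decide_eq_decide]; omega
      · exact absurd (show 1 ≤ i.val by omega) hif
  have heq2 : Function.update z.2 ⟨0, by omega⟩ (fc z) = Y2 n m (t + 1) := by
    rw [hv]; funext p
    rw [Function.update_apply]
    by_cases hp : p = ⟨0, by omega⟩
    · rw [if_pos hp, hp]
      show _ = decide ((0 < t + 1 ∧ (n + 1 + (t + 1) - 0) % 2 = 1) ∨ 0 = t + 1)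
      rw [decide_eq_decide]; omega
    · rw [if_neg hp]
      have hpv : p.val ≠ 0 := fun hc => hp (Fin.ext hc)
      show PS (Y2 n m t) 1 p = _
      simp only [PS]
      split_ifs with hif
      · show decide ((p.val - 1 < t ∧ (n + 1 + t - (p.val - 1)) % 2 = 1) ∨ p.val - 1 = t) =
          decide ((p.val < t + 1 ∧ (n + 1 + (t + 1) - p.val) % 2 = 1) ∨ p.val = t + 1)
        rw [decide_eq_decide]; omega
      · exact absurd (show 1 ≤ p.val by omega) hif
  have h3 : Steps fc 1 z (X1 n (n + 1 + (t + 1)), Y2 n m (t + 1)) := by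
    refine steps_one ?_
    have heq : (Function.update z.1 ⟨0, by omega⟩ (fc z),
        Function.update z.2 ⟨0, by omega⟩ (fc z)) =
        (X1 n (n + 1 + (t + 1)), Y2 n m (t + 1)) := Prod.ext heq1 heq2
    exact heq ▸ hstep
  have := steps_trans (n - 1) h1 (steps_trans (m - 1) h2 h3)
  rwa [show n - 1 + (m - 1 + 1) = n + m - 1 by omega] at this

end Aux19
namespace Aux19

variable {n m : ℕ} {fc : Cfg n m → Bool}

theorem construction (hn : 2 ≤ n) (hm : 2 ≤ m) (hn2 : n % 2 = 0) (hm2 : m % 2 = 0)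
    (hfc : ∀ z : Cfg n m, fc z = (!(z.1 ⟨n - 1, by omega⟩) && !(z.2 ⟨m - 1, by omega⟩))) :
    Steps fc ((n + 1) * (n + m - 1) + m * (n + m - 1))
      ((fun _ => false, fun _ => false) : Cfg n m)
      ((fun i => decide (i.val % 2 = 0), fun i => decide (i.val % 2 = 0)) : Cfg n m) := by
  have hinit : ((fun _ => false, fun _ => false) : Cfg n m) = (X1 n 0, X2 m 0) := by
    refine Prod.ext ?_ ?_
    · funext i
      show false = X1 n 0 i
      simp only [X1]
      rw [eq_comm, decide_eq_false_iff_not]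
      omega
    · funext p
      show false = X2 m 0 p
      simp only [X2]
      rw [eq_comm, decide_eq_false_iff_not]
      omega
  have S1 : Steps fc ((n + 1) * (n + m - 1)) (X1 n 0, X2 m 0) (X1 n (n + 1), X2 m (n + 1)) :=
    steps_mul (st := fun s => (X1 n s, X2 m s)) (n + 1)
      (fun s _ => round1 hn hm hn2 hm2 hfc s)
  have hbridge : (X1 n (n + 1), X2 m (n + 1)) = (X1 n (n + 1 + 0), Y2 n m 0) := by
    refine Prod.ext rfl ?_
    show X2 m (n + 1) = Y2 n m 0
    funext p
    simp only [X2, Y2]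
    rw [decide_eq_decide]
    omega
  have S2 : Steps fc (m * (n + m - 1)) (X1 n (n + 1 + 0), Y2 n m 0)
      (X1 n (n + 1 + m), Y2 n m m) :=
    steps_mul (st := fun t => (X1 n (n + 1 + t), Y2 n m t)) m
      (fun t _ => round2 hn hm hn2 hm2 hfc t)
  have htgt : (X1 n (n + 1 + m), Y2 n m m) =
      ((fun i => decide (i.val % 2 = 0), fun i => decide (i.val % 2 = 0)) : Cfg n m) := by
    refine Prod.ext ?_ ?_
    · show X1 n (n + 1 + m) = fun i : Fin n => decide (i.val % 2 = 0)
      funext i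
      simp only [X1]
      rw [decide_eq_decide]
      have := i.isLt
      omega
    · show Y2 n m m = fun p : Fin m => decide (p.val % 2 = 0)
      funext p
      simp only [Y2]
      rw [decide_eq_decide]
      have := p.isLt
      omega
  rw [hinit]
  exact steps_trans _ S1 (hbridge ▸ htgt ▸ S2)

end Aux19
namespace Aux19

def dB (a b : Bool) : ℚ := if a = b then 0 else 1

lemma dB_nonneg (a b : Bool) : 0 ≤ dB a b := by unfold dB; split_ifs <;> norm_num
lemma dB_le_one (a b : Bool) : dB a b ≤ 1 := by unfold dB; split_ifs <;> norm_num
lemma dB_self (a : Bool) : dB a a = 0 := if_pos rfl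

def nxt {n : ℕ} (p : Fin n) : Fin n :=
  ⟨(p.val + 1) % n, Nat.mod_lt _ (by have := p.isLt; omega)⟩

def wt {n : ℕ} (p : Fin n) : ℚ := if p.val = n - 1 then 2 else (p.val : ℚ)

lemma wt_nonneg {n : ℕ} (p : Fin n) : 0 ≤ wt p := by
  unfold wt; split_ifs
  · norm_num
  · exact Nat.cast_nonneg _

def Phi {n : ℕ} (g : Fin n → Bool) : ℚ := ∑ p : Fin n, wt p * dB (g p) (g (nxt p))

lemma sum_two {n : ℕ} (f f' : Fin n → ℚ) (a b : Fin n) (hab : a ≠ b)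
    (h : ∀ p, p ≠ a → p ≠ b → f' p = f p) :
    (∑ p : Fin n, f' p) - (∑ p : Fin n, f p) = (f' a - f a) + (f' b - f b) := by
  have key : ∑ p : Fin n, (f' p - f p) = ∑ p ∈ ({a, b} : Finset (Fin n)), (f' p - f p) := by
    refine (Finset.sum_subset (Finset.subset_univ _) ?_).symm
    intro x _ hx
    simp only [Finset.mem_insert, Finset.mem_singleton] at hx
    push_neg at hx
    rw [h x hx.1 hx.2, sub_self]
  rw [← Finset.sum_sub_distrib, key, Finset.sum_pair hab]

lemma phi_copy {n : ℕ} (hn : 2 ≤ n) (g : Fin n → Bool) (i : Fin n) (hi : 1 ≤ i.val) :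
    Phi (Function.update g i (g ⟨i.val - 1, by have := i.isLt; omega⟩)) ≤ Phi g + 2 := by
  set i0 : Fin n := ⟨i.val - 1, by have := i.isLt; omega⟩ with hi0
  set g' := Function.update g i (g i0) with hg'
  have hi0v : i0.val = i.val - 1 := rfl
  have hne : i0 ≠ i := by
    intro hc
    have := congrArg Fin.val hc
    rw [hi0v] at this
    omega
  have hgx : ∀ x, x ≠ i → g' x = g x := fun x hx => Function.update_of_ne hx _ _
  have hgi : g' i = g i0 := Function.update_self _ _ _
  have hnx0 : nxt i0 = i := by
    apply Fin.ext
    show (i.val - 1 + 1) % n = i.val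
    rw [show i.val - 1 + 1 = i.val by omega, Nat.mod_eq_of_lt i.isLt]
  have hnxtp : ∀ p : Fin n, p ≠ i0 → nxt p ≠ i := by
    intro p hp hc
    have hcv : (p.val + 1) % n = i.val := congrArg Fin.val hc
    by_cases h2 : p.val + 1 = n
    · rw [h2, Nat.mod_self] at hcv; omega
    · rw [Nat.mod_eq_of_lt (by have := p.isLt; omega)] at hcv
      exact hp (Fin.ext (by omega))
  have hdiff := sum_two (fun p => wt p * dB (g p) (g (nxt p)))
      (fun p => wt p * dB (g' p) (g' (nxt p))) i0 i hne
      (fun p hp1 hp2 => by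
        show wt p * dB (g' p) (g' (nxt p)) = wt p * dB (g p) (g (nxt p))
        rw [hgx p hp2, hgx (nxt p) (hnxtp p hp1)])
  have ht1 : wt i0 * dB (g' i0) (g' (nxt i0)) = 0 := by
    rw [hnx0, hgi, hgx i0 hne, dB_self, mul_zero]
  have hg'nxt : g' (nxt i) = g (nxt i) := by
    refine hgx _ ?_
    intro hc
    have hcv : (i.val + 1) % n = i.val := congrArg Fin.val hc
    by_cases h2 : i.val + 1 = n
    · rw [h2, Nat.mod_self] at hcv; omega
    · rw [Nat.mod_eq_of_lt (by have := i.isLt; omega)] at hcv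
      omega
  have hw0 : wt i0 = ((i.val - 1 : ℕ) : ℚ) := by
    unfold wt
    rw [if_neg (by rw [hi0v]; have := i.isLt; omega)]
  have hw0n : (0:ℚ) ≤ wt i0 := wt_nonneg i0
  have hwn : (0:ℚ) ≤ wt i := wt_nonneg i
  have hwle : wt i ≤ wt i0 + 2 := by
    rw [hw0]
    unfold wt
    split_ifs with h2
    · have : (0:ℚ) ≤ ((i.val - 1 : ℕ) : ℚ) := Nat.cast_nonneg _
      linarith
    · rw [Nat.cast_sub hi]
      push_cast
      linarith
  have hbound : wt i0 * dB (g' i0) (g' (nxt i0)) - wt i0 * dB (g i0) (g (nxt i0)) +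
      (wt i * dB (g' i) (g' (nxt i)) - wt i * dB (g i) (g (nxt i))) ≤ 2 := by
    rw [ht1, hnx0, hgi, hg'nxt]
    by_cases hab : g i0 = g i
    · rw [hab, dB_self, mul_zero]
      linarith
    · have h1 : dB (g i0) (g i) = 1 := if_neg hab
      have h2 : dB (g i0) (g (nxt i)) ≤ 1 := dB_le_one _ _
      have h3 : 0 ≤ dB (g i) (g (nxt i)) := dB_nonneg _ _
      have h4 : wt i * dB (g i0) (g (nxt i)) ≤ wt i := by nlinarith
      have h5 : 0 ≤ wt i * dB (g i) (g (nxt i)) := by positivity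
      rw [h1]
      linarith
  have : Phi g' - Phi g ≤ 2 := by rw [Phi, Phi, hdiff]; exact hbound
  linarith

end Aux19
namespace Aux19

lemma phi_center {n : ℕ} (hn : 2 ≤ n) (g : Fin n → Bool) (i : Fin n) (hiv : i.val = 0)
    (v : Bool) : Phi (Function.update g i v) ≤ Phi g + 2 := by
  set b : Fin n := ⟨n - 1, by omega⟩ with hb
  set g' := Function.update g i v with hg'
  have hbv : b.val = n - 1 := rfl
  have hne : i ≠ b := by
    intro hc
    have := congrArg Fin.val hc
    omega
  have hgx : ∀ x, x ≠ i → g' x = g x := fun x hx => Function.update_of_ne hx _ _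
  have hnxtp : ∀ p : Fin n, p ≠ b → nxt p ≠ i := by
    intro p hp hc
    have hcv : (p.val + 1) % n = i.val := congrArg Fin.val hc
    by_cases h2 : p.val + 1 = n
    · exact hp (Fin.ext (by omega))
    · rw [Nat.mod_eq_of_lt (by have := p.isLt; omega)] at hcv
      omega
  have hdiff := sum_two (fun p => wt p * dB (g p) (g (nxt p)))
      (fun p => wt p * dB (g' p) (g' (nxt p))) i b hne
      (fun p hp1 hp2 => by
        show wt p * dB (g' p) (g' (nxt p)) = wt p * dB (g p) (g (nxt p))
        rw [hgx p hp1, hgx (nxt p) (hnxtp p hp2)])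
  have hwi : wt i = 0 := by
    unfold wt
    rw [if_neg (by omega)]
    rw [hiv]
    norm_num
  have hwb : wt b = 2 := by
    unfold wt
    rw [if_pos hbv]
  have hgb : g' b = g b := hgx b (Ne.symm hne)
  have h1 : dB (g b) (g' (nxt b)) ≤ 1 := dB_le_one _ _
  have h2 : 0 ≤ dB (g b) (g (nxt b)) := dB_nonneg _ _
  have : Phi g' - Phi g ≤ 2 := by
    rw [Phi, Phi, hdiff]
    show wt i * dB (g' i) (g' (nxt i)) - wt i * dB (g i) (g (nxt i)) +
      (wt b * dB (g' b) (g' (nxt b)) - wt b * dB (g b) (g (nxt b))) ≤ 2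
    rw [hwi, hwb, hgb]
    linarith
  linarith

theorem step_phi {n m : ℕ} {fc : Cfg n m → Bool} (hn : 2 ≤ n) (hm : 2 ≤ m)
    {x y : Cfg n m} (h : Step fc x y) :
    Phi y.1 + Phi y.2 ≤ Phi x.1 + Phi x.2 + 4 := by
  cases h with
  | left i hi =>
      have := phi_copy hn x.1 i hi
      simp only
      linarith
  | right j hj =>
      have := phi_copy hm x.2 j hj
      simp only
      linarith
  | center i j hi hj =>
      have h1 := phi_center hn x.1 i hi (fc x)
      have h2 := phi_center hm x.2 j hj (fc x)
      simp only
      linarith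

theorem steps_phi {n m : ℕ} {fc : Cfg n m → Bool} (hn : 2 ≤ n) (hm : 2 ≤ m) :
    ∀ (k : ℕ) (x y : Cfg n m), Steps fc k x y →
      Phi y.1 + Phi y.2 ≤ Phi x.1 + Phi x.2 + 4 * (k : ℚ)
  | 0, x, y, h => by cases h; simp
  | k + 1, x, y, h => by
      obtain ⟨z, hs, hrest⟩ := h
      have h1 := step_phi hn hm hs
      have h2 := steps_phi hn hm k z y hrest
      push_cast
      push_cast at h2
      linarith

lemma Phi_false {n : ℕ} : Phi (fun _ : Fin n => false) = 0 := by
  unfold Phi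
  simp [dB_self]

lemma Phi_target {n : ℕ} (hn : 2 ≤ n) (hn2 : n % 2 = 0) :
    Phi (fun i : Fin n => decide (i.val % 2 = 0)) = ∑ p : Fin n, wt p := by
  unfold Phi
  refine Finset.sum_congr rfl ?_
  intro p _
  have hne : (decide (p.val % 2 = 0)) ≠ (decide ((nxt p).val % 2 = 0)) := by
    rw [ne_eq, decide_eq_decide]
    show ¬(p.val % 2 = 0 ↔ ((p.val + 1) % n) % 2 = 0)
    by_cases hp : p.val + 1 < n
    · rw [Nat.mod_eq_of_lt hp]; omega
    · have hpn : p.val + 1 = n := by have := p.isLt; omega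
      rw [hpn, Nat.mod_self]; omega
  show wt p * dB _ _ = wt p
  rw [show dB (decide (p.val % 2 = 0)) (decide ((nxt p).val % 2 = 0)) = 1 from if_neg hne,
    mul_one]

lemma sum_wt {n : ℕ} (hn : 2 ≤ n) :
    (∑ p : Fin n, wt p) * 2 = (n : ℚ) * ((n : ℚ) - 1) - 2 * ((n : ℚ) - 1) + 4 := by
  set a : Fin n := ⟨n - 1, by omega⟩ with ha
  have hsplit := Finset.sum_erase_add Finset.univ wt (Finset.mem_univ a)
  have herase : ∑ p ∈ Finset.univ.erase a, wt p =
      ∑ p ∈ Finset.univ.erase a, ((p.val : ℚ)) := by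
    refine Finset.sum_congr rfl ?_
    intro p hp
    unfold wt
    rw [if_neg (fun hc => (Finset.ne_of_mem_erase hp) (Fin.ext hc))]
  have hv := Finset.sum_erase_add Finset.univ (fun p : Fin n => ((p.val : ℚ)))
    (Finset.mem_univ a)
  have hwa : wt a = 2 := by unfold wt; rw [if_pos rfl]
  have hav : ((a.val : ℚ)) = (n : ℚ) - 1 := by
    show (((n - 1 : ℕ) : ℚ)) = (n : ℚ) - 1
    rw [Nat.cast_sub (by omega)]
    norm_num
  have hgauss : (∑ p : Fin n, ((p.val : ℚ))) * 2 = (n : ℚ) * ((n : ℚ) - 1) := by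
    rw [Fin.sum_univ_eq_sum_range (fun i => ((i : ℕ) : ℚ)) n]
    rw [show (∑ i ∈ Finset.range n, ((i : ℕ) : ℚ)) = (((∑ i ∈ Finset.range n, i : ℕ)) : ℚ)
      from by push_cast; rfl]
    rw [← Nat.cast_ofNat (n := 2), ← Nat.cast_mul, Finset.sum_range_id_mul_two]
    rw [Nat.cast_mul, Nat.cast_sub (by omega)]
    norm_num
  linarith

end Aux19

/-- In canonical negative double-cycles with both cycle sizes even, the minimal
number of asynchronous updates transforming (0^n, 0^m) into the maximally
expressive configuration ((10)^{n/2}, (10)^{m/2}) is Θ(n² + m²): any update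
sequence achieving it has length Ω(n² + m²), and some sequence of length
O(n² + m²) achieves it. -/
theorem stmt19 :
    (∃ c : ℚ, 0 < c ∧
      ∀ n m : ℕ, ∀ hn : 2 ≤ n, ∀ hm : 2 ≤ m, n % 2 = 0 → m % 2 = 0 →
        ∀ k : ℕ,
          Steps (fun z : Cfg n m => !(z.1 ⟨n - 1, by omega⟩) && !(z.2 ⟨m - 1, by omega⟩))
            k ((fun _ => false, fun _ => false) : Cfg n m)
            ((fun i => decide (i.val % 2 = 0), fun i => decide (i.val % 2 = 0)) : Cfg n m) →
          c * ((n : ℚ) ^ 2 + (m : ℚ) ^ 2) ≤ (k : ℚ)) ∧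
    (∃ C : ℚ, 0 < C ∧
      ∀ n m : ℕ, ∀ hn : 2 ≤ n, ∀ hm : 2 ≤ m, n % 2 = 0 → m % 2 = 0 →
        ∃ k : ℕ,
          Steps (fun z : Cfg n m => !(z.1 ⟨n - 1, by omega⟩) && !(z.2 ⟨m - 1, by omega⟩))
            k ((fun _ => false, fun _ => false) : Cfg n m)
            ((fun i => decide (i.val % 2 = 0), fun i => decide (i.val % 2 = 0)) : Cfg n m) ∧
          (k : ℚ) ≤ C * ((n : ℚ) ^ 2 + (m : ℚ) ^ 2)) := by
  constructor
  · refine ⟨1/32, by norm_num, ?_⟩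
    intro n m hn hm hn2 hm2 k hsteps
    have hphi := Aux19.steps_phi hn hm k _ _ hsteps
    have hphi2 : Aux19.Phi (fun i : Fin n => decide (i.val % 2 = 0)) +
        Aux19.Phi (fun p : Fin m => decide (p.val % 2 = 0)) ≤
        Aux19.Phi (fun _ : Fin n => false) + Aux19.Phi (fun _ : Fin m => false) +
          4 * (k : ℚ) := hphi
    rw [Aux19.Phi_false, Aux19.Phi_false, Aux19.Phi_target hn hn2,
      Aux19.Phi_target hm hm2] at hphi2
    have g1 := Aux19.sum_wt (n := n) hn
    have g2 := Aux19.sum_wt (n := m) hm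
    nlinarith [sq_nonneg ((n : ℚ) - 2), sq_nonneg ((m : ℚ) - 2)]
  · refine ⟨2, by norm_num, ?_⟩
    intro n m hn hm hn2 hm2
    refine ⟨(n + 1) * (n + m - 1) + m * (n + m - 1), ?_, ?_⟩
    · exact Aux19.construction hn hm hn2 hm2 (fun z => rfl)
    · have hc : (((n + 1) * (n + m - 1) + m * (n + m - 1) : ℕ) : ℚ) =
          ((n : ℚ) + 1) * ((n : ℚ) + (m : ℚ) - 1) + (m : ℚ) * ((n : ℚ) + (m : ℚ) - 1) := by
        push_cast [Nat.cast_sub (show 1 ≤ n + m by omega)]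
        ring
      rw [hc]
      nlinarith [sq_nonneg ((n : ℚ) - (m : ℚ)), sq_nonneg ((n : ℚ) + (m : ℚ))]
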